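/- Main calibration theorem: with a faulty measurement of internal distribution P(e,u) applied to state ρ, define f_a(x) = E(a|ρ_x) p̃(x|ρ), g_a(x) = E(a; P_x) P(x) = Σ_e (-1)^{(e,S(a))} P(e,x), and h_a(b) = E(a+b|ρ). Then f_a = g_a * F^{-1}[h_a] (convolution on F_2^m), and hence, if h_a is nowhere zero, g_a = F^{-1}[F[f_a]/h_a]; explicitly, E(a;P_u)P(u) = 2^{-m} Σ_{b,x} (-1)^{(u+x)·b} E(a|ρ_x) p̃(x|ρ) / E(a+b|ρ). -/

import Mathlib

open Finset Matrix

def dotp {m : ℕ} (a x : Fin m → ZMod 2) : ZMod 2 := ∑ i, a i * x i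

/-- Syndrome projection `π_x = Π_i (Id + (-1)^{x_i} S_i)/2`. -/
noncomputable def proj {d : Type*} [Fintype d] [DecidableEq d] {m : ℕ}
    (S : Fin m → Matrix d d ℂ) (x : Fin m → ZMod 2) : Matrix d d ℂ :=
  (List.ofFn fun i => (2 : ℂ)⁻¹ • ((1 : Matrix d d ℂ) + ((-1 : ℂ) ^ (x i).val) • S i)).prod

/-- Stabilizer element `S(a) = Π_i S_i^{a_i}`. -/
noncomputable def Spow {d : Type*} [Fintype d] [DecidableEq d] {m : ℕ}
    (S : Fin m → Matrix d d ℂ) (a : Fin m → ZMod 2) : Matrix d d ℂ :=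
  (List.ofFn fun i => S i ^ (a i).val).prod

/-- `f_a(x) = E(a|ρ_x) p̃(x|ρ)`, the unnormalized post-measurement expectation of `S(a)`
for the faulty measurement with internal distribution `P` and Pauli errors `E`. -/
noncomputable def fA {d ι : Type*} [Fintype d] [DecidableEq d] [Fintype ι] {m : ℕ}
    (S : Fin m → Matrix d d ℂ) (E : ι → Matrix d d ℂ)
    (P : ι × (Fin m → ZMod 2) → ℝ) (ρ : Matrix d d ℂ)
    (a x : Fin m → ZMod 2) : ℂ :=
  ∑ p : ι × (Fin m → ZMod 2), (P p : ℂ) *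
    (Spow S a * (E p.1 * proj S (x + p.2) * ρ * proj S (x + p.2) * (E p.1)ᴴ)).trace

/-- `g_a(u) = E(a; P_u) P(u) = Σ_e (-1)^{(e,S(a))} P(e,u)`. -/
noncomputable def gA {ι : Type*} [Fintype ι] {m : ℕ}
    (pair : ι → (Fin m → ZMod 2) → ZMod 2)
    (P : ι × (Fin m → ZMod 2) → ℝ) (a u : Fin m → ZMod 2) : ℂ :=
  ∑ e : ι, ((-1 : ℂ) ^ (pair e a).val) * (P (e, u) : ℂ)

/-- `h_a(b) = E(a+b|ρ)`. -/
noncomputable def hA {d : Type*} [Fintype d] [DecidableEq d] {m : ℕ}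
    (S : Fin m → Matrix d d ℂ) (ρ : Matrix d d ℂ) (a b : Fin m → ZMod 2) : ℂ :=
  (Spow S (a + b) * ρ).trace

lemma chi_add (s t : ZMod 2) : ((-1:ℂ))^(s+t).val = (-1)^s.val * (-1)^t.val := by
  rcases (show ∀ c : ZMod 2, c = 0 ∨ c = 1 by decide) s with rfl | rfl <;> rcases (show ∀ c : ZMod 2, c = 0 ∨ c = 1 by decide) t with rfl | rfl <;> norm_num [show ZMod.val (2:ZMod 2) = 0 from rfl, show ZMod.val (1:ZMod 2) = 1 from rfl]

lemma chi_sum {ι : Type*} (s : Finset ι) (f : ι → ZMod 2) :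
    ((-1:ℂ))^(∑ i ∈ s, f i).val = ∏ i ∈ s, (-1:ℂ)^(f i).val := by
  induction s using Finset.cons_induction with
  | empty => simp
  | cons i s hi ih => rw [Finset.sum_cons, Finset.prod_cons, chi_add, ih]

lemma zmod2_sum {M : Type*} [AddCommMonoid M] (f : ZMod 2 → M) : ∑ c, f c = f 0 + f 1 := by
  have h : (univ : Finset (ZMod 2)) = {0, 1} := by decide
  rw [h, Finset.sum_insert (by decide), Finset.sum_singleton]

lemma dotp_add_left {m : ℕ} (a b c : Fin m → ZMod 2) : dotp (a+b) c = dotp a c + dotp b c := by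
  simp [dotp, add_mul, Finset.sum_add_distrib]

lemma dotp_add_right {m : ℕ} (a b c : Fin m → ZMod 2) : dotp a (b+c) = dotp a b + dotp a c := by
  simp [dotp, mul_add, Finset.sum_add_distrib]

lemma dotp_comm {m : ℕ} (a b : Fin m → ZMod 2) : dotp a b = dotp b a := by
  simp [dotp, mul_comm]

lemma sum_chi {m : ℕ} (y : Fin m → ZMod 2) :
    ∑ x : Fin m → ZMod 2, ((-1:ℂ))^(dotp x y).val = if y = 0 then (2:ℂ)^m else 0 := by
  have h1 : ∀ x : Fin m → ZMod 2, ((-1:ℂ))^(dotp x y).val = ∏ i, (-1:ℂ)^(x i * y i).val :=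
    fun x => chi_sum _ _
  simp_rw [h1]
  rw [← Fintype.piFinset_univ, ← Finset.prod_univ_sum (t := fun _ : Fin m => (univ : Finset (ZMod 2))) (f := fun i c => (-1:ℂ)^(c * y i).val)]
  have h2 : ∀ i, (∑ c : ZMod 2, (-1:ℂ)^(c * y i).val) = if y i = 0 then 2 else 0 := by
    intro i
    rw [zmod2_sum]
    have : ∀ c : ZMod 2, c = 0 ∨ c = 1 := by decide
    rcases this (y i) with h | h <;> simp [h, show ZMod.val (1:ZMod 2) = 1 from rfl] <;> norm_num
  simp_rw [h2]
  by_cases hy : y = 0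
  · simp [hy]
  · obtain ⟨i, hi⟩ : ∃ i, y i ≠ 0 := by
      by_contra h; push_neg at h; exact hy (funext h)
    rw [Finset.prod_eq_zero (Finset.mem_univ i) (by simp [hi]), if_neg hy]

section lems
variable {d : Type*} [Fintype d] [DecidableEq d] {m : ℕ}

lemma Spow_succ (S : Fin (m+1) → Matrix d d ℂ) (a : Fin (m+1) → ZMod 2) :
    Spow S a = S 0 ^ (a 0).val * Spow (fun i => S i.succ) (fun i => a i.succ) := by
  simp [Spow, List.ofFn_succ]

lemma proj_succ (S : Fin (m+1) → Matrix d d ℂ) (y : Fin (m+1) → ZMod 2) :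
    proj S y = ((2:ℂ)⁻¹ • ((1 : Matrix d d ℂ) + ((-1:ℂ)^(y 0).val) • S 0)) *
      proj (fun i => S i.succ) (fun i => y i.succ) := by
  simp [proj, List.ofFn_succ]

lemma commute_Spow (S : Fin m → Matrix d d ℂ) (A : Matrix d d ℂ)
    (hA : ∀ i, Commute A (S i)) (b : Fin m → ZMod 2) : Commute A (Spow S b) := by
  unfold Spow
  apply Commute.list_prod_right
  intro x hx
  rw [List.mem_ofFn] at hx
  obtain ⟨i, rfl⟩ := hx
  exact (hA i).pow_right _

lemma pow_val_add {M : Matrix d d ℂ} (hM : M * M = 1) (s t : ZMod 2) :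
    M ^ (s+t).val = M ^ s.val * M ^ t.val := by
  rcases (show ∀ c : ZMod 2, c = 0 ∨ c = 1 by decide) s with rfl | rfl <;> rcases (show ∀ c : ZMod 2, c = 0 ∨ c = 1 by decide) t with rfl | rfl <;>
    simp [hM, show ZMod.val ((1:ZMod 2)+1) = 0 by decide, show ZMod.val (1:ZMod 2) = 1 from rfl]

lemma Spow_mul (S : Fin m → Matrix d d ℂ)
    (hcomm : ∀ i j, S i * S j = S j * S i) (hinv : ∀ i, S i * S i = 1)
    (a b : Fin m → ZMod 2) : Spow S a * Spow S b = Spow S (a + b) := by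
  induction m with
  | zero => simp [Spow]
  | succ n ih =>
    rw [Spow_succ S a, Spow_succ S b, Spow_succ S (a+b)]
    have hsw : Commute (Spow (fun i => S i.succ) (fun i => a i.succ)) (S 0 ^ (b 0).val) :=
      ((commute_Spow _ (S 0) (fun i => hcomm 0 i.succ) _).symm.pow_right _)
    calc S 0 ^ (a 0).val * Spow (fun i => S i.succ) (fun i => a i.succ) *
          (S 0 ^ (b 0).val * Spow (fun i => S i.succ) (fun i => b i.succ))
        = S 0 ^ (a 0).val * (Spow (fun i => S i.succ) (fun i => a i.succ) * S 0 ^ (b 0).val) *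
          Spow (fun i => S i.succ) (fun i => b i.succ) := by
          simp only [mul_assoc]
      _ = S 0 ^ (a 0).val * (S 0 ^ (b 0).val * Spow (fun i => S i.succ) (fun i => a i.succ)) *
          Spow (fun i => S i.succ) (fun i => b i.succ) := by rw [hsw.eq]
      _ = (S 0 ^ (a 0).val * S 0 ^ (b 0).val) *
          (Spow (fun i => S i.succ) (fun i => a i.succ) *
           Spow (fun i => S i.succ) (fun i => b i.succ)) := by simp only [mul_assoc]
      _ = S 0 ^ ((a+b) 0).val * Spow (fun i => S i.succ) (fun i => (a+b) i.succ) := by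
          rw [ih (fun i => S i.succ) (fun i j => hcomm i.succ j.succ) (fun i => hinv i.succ)]
          rw [show ((a+b) 0) = a 0 + b 0 from rfl, pow_val_add (hinv 0)]
          rfl

end lems

lemma pi_sum_succ {M : Type*} [AddCommMonoid M] {n : ℕ} (F : (Fin (n+1) → ZMod 2) → M) :
    ∑ b, F b = ∑ c : ZMod 2, ∑ b' : Fin n → ZMod 2, F (Fin.cons c b') := by
  rw [← Equiv.sum_comp (Fin.consEquiv fun _ => ZMod 2) F, Fintype.sum_prod_type]
  rfl

lemma dotp_cons {n : ℕ} (c : ZMod 2) (b' : Fin n → ZMod 2) (y : Fin (n+1) → ZMod 2) :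
    dotp (Fin.cons c b') y = c * y 0 + dotp b' (fun i => y i.succ) := by
  simp [dotp, Fin.sum_univ_succ]

section lems2
variable {d : Type*} [Fintype d] [DecidableEq d] {m : ℕ}

lemma Spow_cons {n : ℕ} (S : Fin (n+1) → Matrix d d ℂ) (c : ZMod 2) (b' : Fin n → ZMod 2) :
    Spow S (Fin.cons c b') = S 0 ^ c.val * Spow (fun i => S i.succ) b' := by
  rw [Spow_succ]
  simp

lemma proj_eq (S : Fin m → Matrix d d ℂ) (y : Fin m → ZMod 2) :
    proj S y = ((2:ℂ)^m)⁻¹ • ∑ b : Fin m → ZMod 2, ((-1:ℂ))^(dotp b y).val • Spow S b := by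
  induction m with
  | zero =>
    have : ∀ b : Fin 0 → ZMod 2, b = (fun i => i.elim0) := fun b => funext fun i => i.elim0
    simp [proj, Spow, dotp, List.ofFn_zero]
  | succ n ih =>
    rw [proj_succ, ih]
    rw [pi_sum_succ (fun b => ((-1:ℂ))^(dotp b y).val • Spow S b), zmod2_sum]
    simp only [dotp_cons, Spow_cons, chi_add]
    simp only [zero_mul, one_mul, ZMod.val_zero, ZMod.val_one, pow_zero, pow_one]
    have h2 : ((2:ℂ)^(n+1))⁻¹ = 2⁻¹ * ((2:ℂ)^n)⁻¹ := by rw [pow_succ]; ring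
    have key : ∑ x : Fin n → ZMod 2,
        ((-1:ℂ)^(y 0).val * (-1)^(dotp x fun i => y i.succ).val) • (S 0 * Spow (fun i => S i.succ) x)
        = (-1:ℂ)^(y 0).val • (S 0 * ∑ x : Fin n → ZMod 2,
            ((-1:ℂ)^(dotp x fun i => y i.succ).val) • Spow (fun i => S i.succ) x) := by
      rw [Matrix.mul_sum, Finset.smul_sum]
      exact Finset.sum_congr rfl fun x _ => by rw [Matrix.mul_smul, smul_smul]
    rw [key, smul_mul_assoc, Matrix.mul_smul, add_mul, one_mul, smul_mul_assoc, smul_smul, h2]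
end lems2

lemma zmod_pi_add_self {m : ℕ} (b : Fin m → ZMod 2) : b + b = 0 :=
  funext fun i => by
    have : ∀ c : ZMod 2, c + c = 0 := by decide
    exact this _

lemma chi_sq (s : ZMod 2) : ((-1:ℂ)^s.val) * (-1)^s.val = 1 := by
  rcases (show ∀ c : ZMod 2, c = 0 ∨ c = 1 by decide) s with rfl | rfl <;> norm_num [show ZMod.val (1:ZMod 2) = 1 from rfl]

lemma card_pi_zmod (m : ℕ) : Fintype.card (Fin m → ZMod 2) = 2^m := by
  simp [Fintype.card_fun]

section lems3
variable {d : Type*} [Fintype d] [DecidableEq d] {m : ℕ}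

lemma proj_Spow_proj (S : Fin m → Matrix d d ℂ)
    (hcomm : ∀ i j, S i * S j = S j * S i) (hinv : ∀ i, S i * S i = 1)
    (a y : Fin m → ZMod 2) :
    proj S y * Spow S a * proj S y
      = ((2:ℂ)^m)⁻¹ • ∑ b : Fin m → ZMod 2, ((-1:ℂ))^(dotp b y).val • Spow S (a + b) := by
  have hN : ((2:ℂ)^m) ≠ 0 := pow_ne_zero _ two_ne_zero
  rw [proj_eq]
  set N : ℂ := ((2:ℂ)^m)⁻¹ with hNdef
  set A : Matrix d d ℂ := ∑ b : Fin m → ZMod 2, ((-1:ℂ))^(dotp b y).val • Spow S b with hA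
  have step1 : (N • A) * Spow S a * (N • A) = (N * N) • (A * Spow S a * A) := by
    rw [smul_mul_assoc, smul_mul_assoc, Matrix.mul_smul, smul_smul]
  rw [step1]
  have step2 : A * Spow S a * A
      = ∑ b : Fin m → ZMod 2, ∑ c : Fin m → ZMod 2,
          (((-1:ℂ))^(dotp b y).val * ((-1:ℂ))^(dotp c y).val) • Spow S (b + a + c) := by
    rw [hA, Matrix.sum_mul, Matrix.sum_mul]
    refine Finset.sum_congr rfl fun b _ => ?_
    rw [smul_mul_assoc, smul_mul_assoc, Spow_mul S hcomm hinv, Matrix.mul_sum, Finset.smul_sum]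
    refine Finset.sum_congr rfl fun c _ => ?_
    rw [Matrix.mul_smul, Spow_mul S hcomm hinv, smul_smul]
  rw [step2]
  have step3 : ∀ b : Fin m → ZMod 2,
      (∑ c : Fin m → ZMod 2,
        (((-1:ℂ))^(dotp b y).val * ((-1:ℂ))^(dotp c y).val) • Spow S (b + a + c))
      = ∑ c : Fin m → ZMod 2, ((-1:ℂ))^(dotp c y).val • Spow S (a + c) := by
    intro b
    rw [← Equiv.sum_comp (Equiv.addLeft b)
      (fun c => (((-1:ℂ))^(dotp b y).val * ((-1:ℂ))^(dotp c y).val) • Spow S (b + a + c))]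
    refine Finset.sum_congr rfl fun c _ => ?_
    have e1 : (Equiv.addLeft b) c = b + c := rfl
    rw [e1, dotp_add_left, chi_add, ← mul_assoc, chi_sq, one_mul]
    congr 2
    have : b + a + (b + c) = (b + b) + (a + c) := by abel
    rw [this, zmod_pi_add_self, zero_add]
  rw [Finset.sum_congr rfl (fun b _ => step3 b), Finset.sum_const]
  rw [card_univ, card_pi_zmod]
  rw [← Nat.cast_smul_eq_nsmul ℂ, smul_smul]
  congr 1
  push_cast
  rw [hNdef]
  field_simp
end lems3

section lems4
variable {d : Type*} [Fintype d] [DecidableEq d] {m : ℕ}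

lemma trace_term (S : Fin m → Matrix d d ℂ)
    (hcomm : ∀ i j, S i * S j = S j * S i) (hinv : ∀ i, S i * S i = 1)
    (E : Matrix d d ℂ) (χ : ℂ) (a y : Fin m → ZMod 2) (ρ : Matrix d d ℂ)
    (Econj : Eᴴ * Spow S a * E = χ • Spow S a) :
    (Spow S a * (E * proj S y * ρ * proj S y * Eᴴ)).trace
      = χ * (((2:ℂ)^m)⁻¹ * ∑ b : Fin m → ZMod 2,
          ((-1:ℂ))^(dotp b y).val * (Spow S (a+b) * ρ).trace) := by
  have h1 : Spow S a * (E * proj S y * ρ * proj S y * Eᴴ)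
      = (Spow S a * E * (proj S y * ρ * proj S y)) * Eᴴ := by simp only [mul_assoc]
  rw [h1, Matrix.trace_mul_comm]
  have h2 : Eᴴ * (Spow S a * E * (proj S y * ρ * proj S y))
      = (Eᴴ * Spow S a * E) * (proj S y * ρ * proj S y) := by simp only [mul_assoc]
  rw [h2, Econj, smul_mul_assoc, Matrix.trace_smul, smul_eq_mul]
  congr 1
  have h3 : Spow S a * (proj S y * ρ * proj S y) = (Spow S a * proj S y * ρ) * proj S y := by
    simp only [mul_assoc]
  rw [h3, Matrix.trace_mul_comm]
  have h4 : proj S y * (Spow S a * proj S y * ρ) = (proj S y * Spow S a * proj S y) * ρ := by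
    simp only [mul_assoc]
  rw [h4, proj_Spow_proj S hcomm hinv a y, smul_mul_assoc, Matrix.trace_smul, smul_eq_mul]
  congr 1
  rw [Matrix.sum_mul, Matrix.trace_sum]
  refine Finset.sum_congr rfl fun b _ => ?_
  rw [smul_mul_assoc, Matrix.trace_smul, smul_eq_mul]
end lems4

lemma pi_add_eq_zero_iff {m : ℕ} (b c : Fin m → ZMod 2) : b + c = 0 ↔ c = b := by
  constructor
  · intro h
    have := congrArg (fun z => b + z) h
    simpa [← add_assoc, zmod_pi_add_self] using this
  · rintro rfl; exact zmod_pi_add_self _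

lemma sum_chi_delta {m : ℕ} (b c : Fin m → ZMod 2) :
    ∑ x : Fin m → ZMod 2, ((-1:ℂ)^(dotp x b).val * (-1:ℂ)^(dotp c x).val)
      = if c = b then (2:ℂ)^m else 0 := by
  have h1 : ∀ x : Fin m → ZMod 2,
      ((-1:ℂ)^(dotp x b).val * (-1:ℂ)^(dotp c x).val) = (-1:ℂ)^(dotp x (b+c)).val := by
    intro x; rw [dotp_add_right, chi_add, dotp_comm c x]
  simp_rw [h1, sum_chi]
  by_cases hc : c = b
  · subst hc; simp [zmod_pi_add_self]
  · rw [if_neg (fun h => hc ((pi_add_eq_zero_iff b c).mp h)), if_neg hc]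

lemma fourier_inv {m : ℕ} (g h : (Fin m → ZMod 2) → ℂ) (hh : ∀ b, h b ≠ 0)
    (u : Fin m → ZMod 2) :
    ((2:ℂ)^m)⁻¹ * ∑ b : Fin m → ZMod 2, ∑ x : Fin m → ZMod 2,
        ((-1:ℂ)^(dotp (u+x) b).val) *
          (∑ u', g u' * (((2:ℂ)^m)⁻¹ * ∑ c, ((-1:ℂ)^(dotp c (x+u')).val) * h c)) / h b
      = g u := by
  have hN : ((2:ℂ)^m) ≠ 0 := pow_ne_zero _ two_ne_zero
  have inner : ∀ b : Fin m → ZMod 2,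
      (∑ x : Fin m → ZMod 2, ((-1:ℂ)^(dotp (u+x) b).val) *
          (∑ u', g u' * (((2:ℂ)^m)⁻¹ * ∑ c, ((-1:ℂ)^(dotp c (x+u')).val) * h c)) / h b)
        = ∑ u', g u' * ((-1:ℂ)^(dotp (u+u') b).val) := by
    intro b
    have expand : ∀ x : Fin m → ZMod 2,
        ((-1:ℂ)^(dotp (u+x) b).val) *
            (∑ u', g u' * (((2:ℂ)^m)⁻¹ * ∑ c, ((-1:ℂ)^(dotp c (x+u')).val) * h c)) / h b
          = ∑ u', ∑ c,
            (g u' * ((2:ℂ)^m)⁻¹ * h c / h b * ((-1:ℂ)^(dotp u b).val) * ((-1:ℂ)^(dotp c u').val))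
              * (((-1:ℂ)^(dotp x b).val) * ((-1:ℂ)^(dotp c x).val)) := by
      intro x
      simp only [div_eq_mul_inv, Finset.mul_sum, Finset.sum_mul]
      refine Finset.sum_congr rfl fun u' _ => ?_
      refine Finset.sum_congr rfl fun c _ => ?_
      rw [dotp_add_left u x b, chi_add, dotp_add_right c x u', chi_add]
      ring
    rw [Finset.sum_congr rfl fun x _ => expand x]
    rw [Finset.sum_comm]
    refine Finset.sum_congr rfl fun u' _ => ?_
    rw [Finset.sum_comm]
    have hxcol : ∀ c : Fin m → ZMod 2,
        (∑ x : Fin m → ZMod 2,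
          (g u' * ((2:ℂ)^m)⁻¹ * h c / h b * ((-1:ℂ)^(dotp u b).val) * ((-1:ℂ)^(dotp c u').val))
            * (((-1:ℂ)^(dotp x b).val) * ((-1:ℂ)^(dotp c x).val)))
        = (g u' * ((2:ℂ)^m)⁻¹ * h c / h b * ((-1:ℂ)^(dotp u b).val) * ((-1:ℂ)^(dotp c u').val))
            * (if c = b then (2:ℂ)^m else 0) := by
      intro c; rw [← Finset.mul_sum, sum_chi_delta]
    rw [Finset.sum_congr rfl fun c _ => hxcol c]
    have hcol : ∀ c : Fin m → ZMod 2,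
        (g u' * ((2:ℂ)^m)⁻¹ * h c / h b * ((-1:ℂ)^(dotp u b).val) * ((-1:ℂ)^(dotp c u').val))
            * (if c = b then (2:ℂ)^m else 0)
        = if c = b then
            (g u' * ((2:ℂ)^m)⁻¹ * h c / h b * ((-1:ℂ)^(dotp u b).val) * ((-1:ℂ)^(dotp c u').val))
              * (2:ℂ)^m else 0 := by
      intro c; split <;> simp
    rw [Finset.sum_congr rfl fun c _ => hcol c, Finset.sum_ite_eq' univ b, if_pos (mem_univ b)]
    rw [dotp_add_left u u' b, chi_add, dotp_comm b u']
    field_simp [hh b]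
  rw [Finset.sum_congr rfl fun b _ => inner b, Finset.sum_comm]
  have outer : ∀ u' : Fin m → ZMod 2,
      (∑ b : Fin m → ZMod 2, g u' * ((-1:ℂ)^(dotp (u+u') b).val))
        = if u' = u then g u' * (2:ℂ)^m else 0 := by
    intro u'
    rw [← Finset.mul_sum]
    have : ∀ b : Fin m → ZMod 2, ((-1:ℂ)^(dotp (u+u') b).val) = ((-1:ℂ)^(dotp b (u+u')).val) :=
      fun b => by rw [dotp_comm]
    rw [Finset.sum_congr rfl fun b _ => this b, sum_chi]
    by_cases hu : u' = u
    · subst hu; simp [zmod_pi_add_self]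
    · rw [if_neg (fun hz => hu ((pi_add_eq_zero_iff u u').mp hz)), mul_zero, if_neg hu]
  rw [Finset.sum_congr rfl fun u' _ => outer u', Finset.sum_ite_eq' univ u, if_pos (mem_univ u)]
  field_simp


/-- Main calibration theorem: `f_a = g_a * F⁻¹[h_a]` (convolution on `F_2^m`), and for
nowhere vanishing `h_a` the explicit inversion formula
`E(a;P_u)P(u) = 2^{-m} Σ_{b,x} (-1)^{(u+x)·b} E(a|ρ_x) p̃(x|ρ) / E(a+b|ρ)` holds. -/
theorem calibration_main {d ι : Type*} [Fintype d] [DecidableEq d] [Fintype ι] {m : ℕ}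
    (S : Fin m → Matrix d d ℂ)
    (hcomm : ∀ i j, S i * S j = S j * S i)
    (hinv : ∀ i, S i * S i = 1)
    (E : ι → Matrix d d ℂ)
    (pair : ι → (Fin m → ZMod 2) → ZMod 2)
    (hconj : ∀ (e : ι) (b : Fin m → ZMod 2),
      (E e)ᴴ * Spow S b * E e = ((-1 : ℂ) ^ (pair e b).val) • Spow S b)
    (P : ι × (Fin m → ZMod 2) → ℝ) (hPnn : ∀ p, 0 ≤ P p) (hPsum : ∑ p, P p = 1)
    (ρ : Matrix d d ℂ) (a : Fin m → ZMod 2) :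
    (∀ x : Fin m → ZMod 2,
      fA S E P ρ a x = ∑ u, gA pair P a u *
        (((2 : ℂ) ^ m)⁻¹ * ∑ b, ((-1 : ℂ) ^ (dotp b (x + u)).val) * hA S ρ a b)) ∧
    ((∀ b, hA S ρ a b ≠ 0) → ∀ u : Fin m → ZMod 2,
      gA pair P a u = ((2 : ℂ) ^ m)⁻¹ *
        ∑ b, ∑ x, ((-1 : ℂ) ^ (dotp (u + x) b).val) * fA S E P ρ a x / hA S ρ a b) := by
  have main1 : ∀ x : Fin m → ZMod 2,
      fA S E P ρ a x = ∑ u, gA pair P a u *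
        (((2 : ℂ) ^ m)⁻¹ * ∑ b, ((-1 : ℂ) ^ (dotp b (x + u)).val) * hA S ρ a b) := by
    intro x
    unfold fA
    rw [Fintype.sum_prod_type, Finset.sum_comm]
    refine Finset.sum_congr rfl fun u _ => ?_
    unfold gA
    rw [Finset.sum_mul]
    refine Finset.sum_congr rfl fun e _ => ?_
    rw [trace_term S hcomm hinv (E e) _ a (x+u) ρ (hconj e a)]
    simp only [hA]
    ring
  refine ⟨main1, fun hh u => ?_⟩
  rw [← fourier_inv (gA pair P a) (hA S ρ a) hh u]
  congr 1
  refine Finset.sum_congr rfl fun b _ => Finset.sum_congr rfl fun x _ => ?_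
  rw [main1 x]
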